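/- Let A₂ be an affine linear bijection of 𝔽_q^n and let g be any 𝔽_q-linear combination of the m−t polynomials (U_i(x−𝔮(y), y)) ∘ A₂, i = 1, …, m−t. Then there exist polynomials v, H₁, …, H_t, all of total degree at most 2, such that g = v + Σ_{j=1}^t H_j · ((x_j − 𝔮_j(y)) ∘ A₂). -/

import Mathlib

open MvPolynomial

/-- Substitution `x_j ↦ x_j - q_j(y)` (identity on the `y`-variables). -/
noncomputable def substQ {K : Type*} [Field K] (n t : ℕ)
    (Q : Fin t → MvPolynomial (Fin n) K) :
    MvPolynomial (Fin n) K →ₐ[K] MvPolynomial (Fin n) K :=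
  aeval fun k : Fin n => if hk : (k : ℕ) < t then X k - Q ⟨(k : ℕ), hk⟩ else X k

/-- Composition `f ∘ A` of a polynomial with the affine map `A(v) = L v + c`. -/
noncomputable def compAff {K : Type*} [Field K] {n : ℕ}
    (L : Matrix (Fin n) (Fin n) K) (c : Fin n → K)
    (f : MvPolynomial (Fin n) K) : MvPolynomial (Fin n) K :=
  aeval (fun i : Fin n => (∑ j : Fin n, C (L i j) * X j) + C (c i)) f

namespace Stmt17Aux

variable {K : Type*} [Field K] {n t : ℕ}

/-- degree bound for aeval with linear substitutions -/
lemma totalDegree_aeval_le (g : Fin n → MvPolynomial (Fin n) K)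
    (hg : ∀ i, (g i).totalDegree ≤ 1) (f : MvPolynomial (Fin n) K) :
    (aeval g f).totalDegree ≤ f.totalDegree := by
  conv_lhs => rw [f.as_sum, map_sum]
  refine (totalDegree_finset_sum _ _).trans (Finset.sup_le fun d hd => ?_)
  rw [aeval_monomial]
  refine (totalDegree_mul _ _).trans ?_
  have h1 : (algebraMap K (MvPolynomial (Fin n) K) (coeff d f)).totalDegree = 0 :=
    totalDegree_C _
  rw [h1, zero_add]
  have h2 : (d.prod fun i k => g i ^ k).totalDegree ≤ d.sum fun _ k => k := by
    rw [Finsupp.prod, Finsupp.sum]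
    refine (totalDegree_finset_prod _ _).trans (Finset.sum_le_sum fun i _ => ?_)
    exact (totalDegree_pow _ _).trans (by
      calc d i * (g i).totalDegree ≤ d i * 1 := Nat.mul_le_mul_left _ (hg i)
        _ = d i := Nat.mul_one _)
  exact h2.trans (le_totalDegree hd)

variable (htn : t ≤ n) (Q : Fin t → MvPolynomial (Fin n) K)

/-- generator -/
noncomputable def gen (j : Fin t) : MvPolynomial (Fin n) K :=
  X (Fin.castLE htn j) - Q j

def Good (dv dh : ℕ) (U : MvPolynomial (Fin n) K) : Prop :=
  ∃ (v : MvPolynomial (Fin n) K) (H : Fin t → MvPolynomial (Fin n) K),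
    v.totalDegree ≤ dv ∧ (∀ j, (H j).totalDegree ≤ dh) ∧
    substQ n t Q U = v + ∑ j : Fin t, H j * gen htn Q j

variable (hQdeg : ∀ j, (Q j).totalDegree ≤ 2)

include hQdeg in
lemma totalDegree_gen_le (j : Fin t) : (gen htn Q j).totalDegree ≤ 2 := by
  rw [gen, sub_eq_add_neg]
  refine (totalDegree_add _ _).trans ?_
  rw [totalDegree_neg]
  exact max_le ((totalDegree_X _).le.trans one_le_two) (hQdeg j)

lemma substQ_C (c : K) : substQ n t Q (C c) = C c := by
  simp [substQ, algebraMap_eq]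

lemma good_zero : Good htn Q 0 0 (0 : MvPolynomial (Fin n) K) :=
  ⟨0, 0, by simp, by simp, by simp⟩

lemma good_add {dv dh : ℕ} {U₁ U₂ : MvPolynomial (Fin n) K}
    (h₁ : Good htn Q dv dh U₁) (h₂ : Good htn Q dv dh U₂) :
    Good htn Q dv dh (U₁ + U₂) := by
  obtain ⟨v₁, H₁, hv₁, hH₁, he₁⟩ := h₁
  obtain ⟨v₂, H₂, hv₂, hH₂, he₂⟩ := h₂
  refine ⟨v₁ + v₂, fun j => H₁ j + H₂ j,
    (totalDegree_add _ _).trans (max_le hv₁ hv₂),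
    fun j => (totalDegree_add _ _).trans (max_le (hH₁ j) (hH₂ j)), ?_⟩
  rw [map_add, he₁, he₂]
  simp only [add_mul, Finset.sum_add_distrib]
  ring

lemma good_smul {dv dh : ℕ} {U : MvPolynomial (Fin n) K} (a : K)
    (h : Good htn Q dv dh U) : Good htn Q dv dh (a • U) := by
  obtain ⟨v, H, hv, hH, he⟩ := h
  refine ⟨a • v, fun j => a • H j, (totalDegree_smul_le _ _).trans hv,
    fun j => (totalDegree_smul_le _ _).trans (hH j), ?_⟩
  rw [map_smul, he, smul_add, Finset.smul_sum]
  simp [smul_mul_assoc]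

lemma good_mono {dv dh dv' dh' : ℕ} {U : MvPolynomial (Fin n) K}
    (h : Good htn Q dv dh U) (h1 : dv ≤ dv') (h2 : dh ≤ dh') :
    Good htn Q dv' dh' U := by
  obtain ⟨v, H, hv, hH, he⟩ := h
  exact ⟨v, H, hv.trans h1, fun j => (hH j).trans h2, he⟩

lemma good_C (c : K) : Good htn Q 0 0 (C c : MvPolynomial (Fin n) K) :=
  ⟨C c, 0, by simp, by simp, by simp⟩

lemma substQ_X (k : Fin n) :
    substQ n t Q (X k)
      = if hk : (k : ℕ) < t then X k - Q ⟨(k : ℕ), hk⟩ else X k := by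
  simp [substQ]

lemma castLE_mk {k : Fin n} (hk : (k : ℕ) < t) :
    Fin.castLE htn ⟨(k : ℕ), hk⟩ = k := rfl

include hQdeg in
lemma good_mul_X {dv dh : ℕ} {U : MvPolynomial (Fin n) K} (k : Fin n)
    (h : Good htn Q dv dh U) :
    Good htn Q (dv + 1) (max (dh + 2) dv) (U * X k) := by
  obtain ⟨v, H, hv, hH, he⟩ := h
  have key : substQ n t Q (U * X k) = substQ n t Q U * substQ n t Q (X k) := map_mul _ _ _
  rw [substQ_X] at key
  by_cases hk : (k : ℕ) < t
  · rw [dif_pos hk] at key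
    set k₀ : Fin t := ⟨(k : ℕ), hk⟩ with hk₀
    have hgen : X k - Q ⟨(k : ℕ), hk⟩ = gen htn Q k₀ := by
      rw [gen, castLE_mk htn hk]
    rw [hgen] at key
    refine ⟨0, fun j => H j * gen htn Q k₀ + if j = k₀ then v else 0,
      by simp, fun j => ?_, ?_⟩
    · refine (totalDegree_add _ _).trans (max_le ?_ ?_)
      · refine le_max_of_le_left ?_
        exact (totalDegree_mul _ _).trans
          (add_le_add (hH j) (totalDegree_gen_le htn Q hQdeg k₀))
      · by_cases hj : j = k₀
        · simp only [hj, if_true]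
          exact le_max_of_le_right hv
        · simp [hj]
    · rw [key, he]
      simp only [add_mul, ite_mul, zero_mul, Finset.sum_add_distrib,
        Finset.sum_ite_eq', Finset.mem_univ, if_true, zero_add, Finset.sum_mul]
      rw [add_comm]
      congr 1
      exact Finset.sum_congr rfl fun j _ => by ring
  · rw [dif_neg hk] at key
    refine ⟨v * X k, fun j => H j * X k, ?_, fun j => ?_, ?_⟩
    · exact (totalDegree_mul _ _).trans
        (add_le_add hv (totalDegree_X _).le)
    · refine le_max_of_le_left ?_
      exact (totalDegree_mul _ _).trans
        (add_le_add (hH j) ((totalDegree_X _).le.trans one_le_two))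
    · rw [key, he]
      simp only [add_mul, Finset.sum_mul]
      ring_nf

lemma good_monomial_one (k : Fin n) (c : K) :
    Good htn Q 1 0 (C c * X k : MvPolynomial (Fin n) K) := by
  by_cases hk : (k : ℕ) < t
  · set k₀ : Fin t := ⟨(k : ℕ), hk⟩
    refine ⟨0, fun j => if j = k₀ then C c else 0, by simp, fun j => ?_, ?_⟩
    · by_cases hj : j = k₀ <;> simp [hj]
    · rw [map_mul, substQ_X, dif_pos hk, substQ_C]
      simp only [ite_mul, zero_mul, Finset.sum_ite_eq', Finset.mem_univ, if_true, zero_add]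
      rw [gen, castLE_mk htn hk]
  · refine ⟨C c * X k, 0, ?_, by simp, ?_⟩
    · refine (totalDegree_mul _ _).trans ?_
      simp [totalDegree_C, totalDegree_X]
    · rw [map_mul, substQ_X, dif_neg hk, substQ_C]
      simp

lemma finsupp_decomp {d : Fin n →₀ ℕ} (hd : d ≠ 0) :
    ∃ (k : Fin n) (d' : Fin n →₀ ℕ),
      d = d' + Finsupp.single k 1 ∧
      (d.sum fun _ e => e) = (d'.sum fun _ e => e) + 1 := by
  obtain ⟨k, hk⟩ := Finsupp.ne_iff.mp hd
  simp only [Finsupp.coe_zero, Pi.zero_apply] at hk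
  have hle : Finsupp.single k 1 ≤ d := by
    rw [Finsupp.single_le_iff]
    omega
  refine ⟨k, d - Finsupp.single k 1, (tsub_add_cancel_of_le hle).symm, ?_⟩
  conv_lhs => rw [← tsub_add_cancel_of_le hle]
  rw [Finsupp.sum_add_index (by simp) (by simp)]
  simp [Finsupp.sum_single_index]

include hQdeg in
lemma good_monomial (d : Fin n →₀ ℕ) (c : K)
    (hd : (d.sum fun _ e => e) ≤ 2) :
    Good htn Q 2 2 (monomial d c) := by
  by_cases h0 : d = 0
  · subst h0
    rw [monomial_zero']
    exact good_mono htn Q (good_C htn Q c) (by norm_num) (by norm_num)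
  obtain ⟨k, d', rfl, hsum⟩ := finsupp_decomp h0
  rw [hsum] at hd
  have hmon : monomial (d' + Finsupp.single k 1) c = monomial d' c * X k := by
    rw [add_comm, monomial_single_add, pow_one, mul_comm]
  rw [hmon]
  by_cases h0' : d' = 0
  · subst h0'
    rw [monomial_zero']
    exact good_mono htn Q (good_monomial_one htn Q k c) one_le_two (Nat.zero_le _)
  obtain ⟨l, d'', rfl, hsum'⟩ := finsupp_decomp h0'
  rw [hsum'] at hd
  have h0'' : d'' = 0 := by
    have hz : (d''.sum fun _ e => e) = 0 := by omega
    rw [Finsupp.sum] at hz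
    ext i
    simp only [Finsupp.coe_zero, Pi.zero_apply]
    by_contra hi
    exact hi ((Finset.sum_eq_zero_iff.mp hz) i (Finsupp.mem_support_iff.mpr hi))
  subst h0''
  have hmon' : monomial ((0 : Fin n →₀ ℕ) + Finsupp.single l 1) c = C c * X l := by
    rw [zero_add,
      show (Finsupp.single l 1 : Fin n →₀ ℕ) = Finsupp.single l 1 + 0 from (add_zero _).symm,
      monomial_single_add, pow_one, monomial_zero', mul_comm]
  rw [hmon']
  have := good_mul_X htn Q hQdeg k (good_monomial_one htn Q l c)
  exact good_mono htn Q this le_rfl (by norm_num)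

include hQdeg in
lemma good_of_totalDegree_le (U : MvPolynomial (Fin n) K)
    (hU : U.totalDegree ≤ 2) : Good htn Q 2 2 U := by
  rw [U.as_sum]
  have : ∀ d ∈ U.support, Good htn Q 2 2 (monomial d (coeff d U)) := fun d hd =>
    good_monomial htn Q hQdeg d _ ((le_totalDegree hd).trans hU)
  revert this
  generalize U.support = s
  intro h
  induction s using Finset.induction_on with
  | empty =>
    rw [Finset.sum_empty]
    exact good_mono htn Q (good_zero htn Q) (Nat.zero_le _) (Nat.zero_le _)
  | insert _ _ hns ih =>
    rw [Finset.sum_insert hns]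
    exact good_add htn Q (h _ (Finset.mem_insert_self _ _))
      (ih fun d hd => h d (Finset.mem_insert_of_mem hd))

end Stmt17Aux

open Stmt17Aux in
theorem stmt_17 {K : Type*} [Field K] [Fintype K] {n m t : ℕ}
    (ht : 0 < t) (htn : t < n) (htm : t ≤ m)
    (Q : Fin t → MvPolynomial (Fin n) K)
    (hQdeg : ∀ j, (Q j).totalDegree ≤ 2)
    (hQvars : ∀ j, ∀ i ∈ (Q j).vars, t ≤ (i : ℕ))
    (U : Fin (m - t) → MvPolynomial (Fin n) K)
    (hUdeg : ∀ i, (U i).totalDegree ≤ 2)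
    (L2 : GL (Fin n) K) (c2 : Fin n → K)
    (a : Fin (m - t) → K) :
    ∃ (v : MvPolynomial (Fin n) K) (H : Fin t → MvPolynomial (Fin n) K),
      v.totalDegree ≤ 2 ∧ (∀ j, (H j).totalDegree ≤ 2) ∧
      (∑ i : Fin (m - t), a i •
          compAff (L2 : Matrix (Fin n) (Fin n) K) c2 (substQ n t Q (U i)))
        = v + ∑ j : Fin t,
            H j * compAff (L2 : Matrix (Fin n) (Fin n) K) c2 (X (Fin.castLE htn.le j) - Q j) := by
  -- step 1: decompose the linear combination before composing with the affine map
  have hGood : Good htn.le Q 2 2 (∑ i : Fin (m - t), a i • U i) := by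
    have : ∀ d ∈ (Finset.univ : Finset (Fin (m - t))), Good htn.le Q 2 2 (a d • U d) :=
      fun i _ => good_smul htn.le Q (a i) (good_of_totalDegree_le htn.le Q hQdeg (U i) (hUdeg i))
    revert this
    generalize (Finset.univ : Finset (Fin (m - t))) = s
    intro h
    induction s using Finset.induction_on with
    | empty =>
      rw [Finset.sum_empty]
      exact good_mono htn.le Q (good_zero htn.le Q) (Nat.zero_le _) (Nat.zero_le _)
    | insert _ _ hns ih =>
      rw [Finset.sum_insert hns]
      exact good_add htn.le Q (h _ (Finset.mem_insert_self _ _))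
        (ih fun d hd => h d (Finset.mem_insert_of_mem hd))
  obtain ⟨v₀, H₀, hv₀, hH₀, he₀⟩ := hGood
  -- step 2: compose with the affine map
  set g : Fin n → MvPolynomial (Fin n) K :=
    fun i : Fin n => (∑ j : Fin n, C ((L2 : Matrix (Fin n) (Fin n) K) i j) * X j) + C (c2 i) with hg
  have hgdeg : ∀ i, (g i).totalDegree ≤ 1 := by
    intro i
    refine (totalDegree_add _ _).trans (max_le ?_ (by simp [totalDegree_C]))
    refine (totalDegree_finset_sum _ _).trans (Finset.sup_le fun j _ => ?_)
    refine (totalDegree_mul _ _).trans ?_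
    simp [totalDegree_C, totalDegree_X]
  have hcompdeg : ∀ p : MvPolynomial (Fin n) K,
      (compAff (L2 : Matrix (Fin n) (Fin n) K) c2 p).totalDegree ≤ p.totalDegree :=
    fun p => totalDegree_aeval_le g hgdeg p
  refine ⟨compAff (L2 : Matrix (Fin n) (Fin n) K) c2 v₀,
    fun j => compAff (L2 : Matrix (Fin n) (Fin n) K) c2 (H₀ j),
    (hcompdeg v₀).trans hv₀, fun j => (hcompdeg (H₀ j)).trans (hH₀ j), ?_⟩
  have hmain : (∑ i : Fin (m - t), a i • substQ n t Q (U i))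
      = v₀ + ∑ j : Fin t, H₀ j * (X (Fin.castLE htn.le j) - Q j) := by
    have hs : (substQ n t Q) (∑ i : Fin (m - t), a i • U i)
        = ∑ i : Fin (m - t), a i • substQ n t Q (U i) := by
      rw [map_sum]; simp only [map_smul]
    rw [← hs, he₀]
    simp only [gen]
  calc (∑ i : Fin (m - t), a i •
          compAff (L2 : Matrix (Fin n) (Fin n) K) c2 (substQ n t Q (U i)))
      = compAff (L2 : Matrix (Fin n) (Fin n) K) c2
          (∑ i : Fin (m - t), a i • substQ n t Q (U i)) := by
        unfold compAff
        rw [map_sum]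
        simp only [map_smul]
    _ = _ := by
        rw [hmain]
        unfold compAff
        rw [map_add, map_sum]
        simp only [map_mul]
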